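/- arXiv:1910.04815 — 2 statements merged into one kernel-verified Lean document; each statement's English description precedes it below -/
import Mathlib

section
/- Let p ≥ 2 and N ∈ ℕ. There exists a constant c > 0 depending only on p and N such that for all vectors a, b ∈ ℝ^N, (|a|^(p-2)·a − |b|^(p-2)·b) · (a − b) ≥ c·|a − b|^p. -/
theorem stmt_2 (p : ℝ) (hp : 2 ≤ p) (N : ℕ) :
    ∃ c > (0 : ℝ), ∀ a b : EuclideanSpace ℝ (Fin N),
      c * ‖a - b‖ ^ p ≤
        inner ℝ ((‖a‖ ^ (p - 2) : ℝ) • a - (‖b‖ ^ (p - 2) : ℝ) • b) (a - b) := by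
  refine ⟨(2:ℝ) ^ (1 - p), Real.rpow_pos_of_pos two_pos _, fun a b => ?_⟩
  set A := ‖a‖ with hA
  set B := ‖b‖ with hB
  have hA0 : 0 ≤ A := norm_nonneg a
  have hB0 : 0 ≤ B := norm_nonneg b
  have hp2 : 0 ≤ p - 2 := by linarith
  set α := A ^ (p-2) with hα
  set β := B ^ (p-2) with hβ
  have hα0 : 0 ≤ α := Real.rpow_nonneg hA0 _
  have hβ0 : 0 ≤ β := Real.rpow_nonneg hB0 _
  set t : ℝ := inner ℝ a b with ht
  have hinner : (inner ℝ ((α : ℝ) • a - (β : ℝ) • b) (a - b) : ℝ)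
      = α * A^2 + β * B^2 - (α + β) * t := by
    simp only [inner_sub_left, inner_sub_right, real_inner_smul_left,
      real_inner_self_eq_norm_sq, ← hA, ← hB]
    rw [ht, real_inner_comm a b]
    ring
  have hns : ‖a - b‖^2 = A^2 - 2*t + B^2 := by
    rw [norm_sub_sq_real]; try ring
  have hkey : 0 ≤ (α - β) * (A^2 - B^2) := by
    rcases le_total A B with h | h
    · have h1 : α ≤ β := Real.rpow_le_rpow hA0 h hp2
      have h2 : A^2 ≤ B^2 := by nlinarith
      nlinarith
    · have h1 : β ≤ α := Real.rpow_le_rpow hB0 h hp2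
      have h2 : B^2 ≤ A^2 := by nlinarith
      nlinarith
  have hstep1 : (α + β)/2 * ‖a - b‖^2 ≤ α * A^2 + β * B^2 - (α + β) * t := by
    rw [hns]; nlinarith
  have hab : ‖a - b‖ ≤ A + B := norm_sub_le a b
  have hstep2 : ‖a - b‖ ^ (p-2) ≤ (2:ℝ)^(p-2) * (α + β) := by
    have h1 : ‖a - b‖ ^ (p-2) ≤ (A + B) ^ (p-2) :=
      Real.rpow_le_rpow (norm_nonneg _) hab hp2
    have h2 : (A + B) ^ (p-2) ≤ (2 * max A B) ^ (p-2) := by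
      apply Real.rpow_le_rpow (by positivity) _ hp2
      rcases le_total A B with h | h
      · rw [max_eq_right h]; linarith
      · rw [max_eq_left h]; linarith
    have h3 : ((2:ℝ) * max A B) ^ (p-2) = (2:ℝ)^(p-2) * (max A B)^(p-2) :=
      Real.mul_rpow (by norm_num) (le_max_of_le_left hA0)
    have h4 : (max A B)^(p-2) ≤ α + β := by
      rcases le_total A B with h | h
      · rw [max_eq_right h]; linarith
      · rw [max_eq_left h]; linarith
    have h5 : (0:ℝ) ≤ (2:ℝ)^(p-2) := Real.rpow_nonneg (by norm_num) _
    calc ‖a - b‖ ^ (p-2) ≤ (2 * max A B) ^ (p-2) := le_trans h1 h2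
      _ = (2:ℝ)^(p-2) * (max A B)^(p-2) := h3
      _ ≤ (2:ℝ)^(p-2) * (α + β) := by exact mul_le_mul_of_nonneg_left h4 h5
  have hsplit : ‖a - b‖ ^ p = ‖a - b‖ ^ (p-2) * ‖a - b‖^2 := by
    have : ‖a - b‖ ^ ((p-2) + 2) = ‖a - b‖ ^ (p-2) * ‖a - b‖ ^ (2:ℝ) :=
      Real.rpow_add_of_nonneg (norm_nonneg _) hp2 (by norm_num)
    rw [sub_add_cancel] at this
    rw [this, Real.rpow_two]
  have hc : (2:ℝ)^(1-p) * (2:ℝ)^(p-2) = 1/2 := by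
    rw [← Real.rpow_add two_pos, show (1 - p + (p-2)) = -1 by ring,
      Real.rpow_neg_one]
    norm_num
  have hc0 : (0:ℝ) < (2:ℝ)^(1-p) := Real.rpow_pos_of_pos two_pos _
  have hsq : (0:ℝ) ≤ ‖a - b‖^2 := sq_nonneg _
  calc (2:ℝ)^(1-p) * ‖a - b‖ ^ p
      = (2:ℝ)^(1-p) * (‖a - b‖ ^ (p-2) * ‖a - b‖^2) := by rw [hsplit]
    _ ≤ (2:ℝ)^(1-p) * ((2:ℝ)^(p-2) * (α + β) * ‖a - b‖^2) := by
        apply mul_le_mul_of_nonneg_left _ hc0.le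
        exact mul_le_mul_of_nonneg_right hstep2 hsq
    _ = ((2:ℝ)^(1-p) * (2:ℝ)^(p-2)) * ((α + β) * ‖a - b‖^2) := by ring
    _ = (α + β)/2 * ‖a - b‖^2 := by rw [hc]; ring
    _ ≤ α * A^2 + β * B^2 - (α + β) * t := hstep1
    _ = inner ℝ ((α : ℝ) • a - (β : ℝ) • b) (a - b) := hinner.symm
end

section
/- Let 1 < p < 2 and N ∈ ℕ. There exists a constant c > 0 depending only on p and N such that for all vectors a, b ∈ ℝ^N with (a, b) ≠ (0, 0), (|a|^(p-2)·a − |b|^(p-2)·b) · (a − b) ≥ c·|a − b|^2 / (|a| + |b|)^(2−p). -/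
open Real

/-- helper: `α ^ (p-2) * α ^ 2 = α ^ p` for `α ≥ 0`, `0 < p < 2`. -/
lemma simon_rpow_aux {p α : ℝ} (hp : 0 < p) (hp2 : p < 2) (hα : 0 ≤ α) :
    α ^ (p - 2) * (α * α) = α ^ p := by
  rcases eq_or_lt_of_le hα with h | h
  · rw [← h, Real.zero_rpow (by intro h'; linarith : p - 2 ≠ 0), Real.zero_rpow hp.ne']
    ring
  · have e : α ^ p = α ^ (p - 2) * α * α := by
      calc α ^ p = α ^ ((p - 2) + 1 + 1) := by congr 1; ring
        _ = α ^ ((p - 2) + 1) * α := Real.rpow_add_one h.ne' _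
        _ = α ^ (p - 2) * α * α := by rw [Real.rpow_add_one h.ne']
    rw [e]; ring

/-- helper: `α ^ (p-2) * (α * β) = α ^ (p-1) * β` for `α ≥ 0`, `1 < p < 2`. -/
lemma simon_rpow_aux2 {p α : ℝ} (hp : 1 < p) (hp2 : p < 2) (hα : 0 ≤ α) (β : ℝ) :
    α ^ (p - 2) * (α * β) = α ^ (p - 1) * β := by
  rcases eq_or_lt_of_le hα with h | h
  · rw [← h, Real.zero_rpow (by intro h'; linarith : p - 2 ≠ 0),
      Real.zero_rpow (by intro h'; linarith : p - 1 ≠ 0)]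
    ring
  · have e : α ^ (p - 1) = α ^ (p - 2) * α := by
      calc α ^ (p - 1) = α ^ ((p - 2) + 1) := by congr 1; ring
        _ = α ^ (p - 2) * α := Real.rpow_add_one h.ne' _
    rw [e]; ring

/-- Key 1-D lemma, aligned case (with the WLOG `β ≤ α` already done). -/
lemma simon_scalar_A' {p α β : ℝ} (hp1 : 1 < p) (hp2 : p < 2)
    (hβ : 0 ≤ β) (hβα : β ≤ α) (hsum : 0 < α + β) :
    (p - 1) * (α - β) ^ (2:ℕ) * (α + β) ^ (p - 2) ≤
      α ^ p + β ^ p - (α ^ (p - 2) + β ^ (p - 2)) * (α * β) := by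
  have hα : 0 < α := by linarith
  have hX : (α + β) ^ (p - 2) ≤ α ^ (p - 2) :=
    Real.rpow_le_rpow_of_nonpos hα (by linarith) (by linarith)
  have hXpos : (0:ℝ) < (α + β) ^ (p - 2) := Real.rpow_pos_of_pos hsum _
  have hq1 : (0:ℝ) ≤ p - 1 := by linarith
  have hq2 : p - 1 ≤ 1 := by linarith
  -- Bernoulli: β^(p-1) ≤ α^(p-1) * (1 + (p-1)*(β/α - 1))
  have hbern : β ^ (p-1) ≤ α ^ (p-1) * (1 + (p-1) * (β/α - 1)) := by
    have hs : (-1:ℝ) ≤ β/α - 1 := by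
      have : 0 ≤ β/α := div_nonneg hβ hα.le
      linarith
    have h1 : (1 + (β/α - 1)) ^ (p-1) ≤ 1 + (p-1) * (β/α - 1) :=
      rpow_one_add_le_one_add_mul_self hs hq1 hq2
    have h2 : (1 + (β/α - 1)) = β/α := by ring
    rw [h2] at h1
    have h3 : (β/α) ^ (p-1) = β ^ (p-1) / α ^ (p-1) :=
      Real.div_rpow hβ hα.le _
    rw [h3] at h1
    have hαp : (0:ℝ) < α ^ (p-1) := Real.rpow_pos_of_pos hα _
    calc β ^ (p-1) = (β ^ (p-1) / α ^ (p-1)) * α ^ (p-1) := by field_simp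
      _ ≤ (1 + (p-1) * (β/α - 1)) * α ^ (p-1) := mul_le_mul_of_nonneg_right h1 hαp.le
      _ = α ^ (p-1) * (1 + (p-1) * (β/α - 1)) := by ring
  -- key: α^(p-1) - β^(p-1) ≥ (p-1) * (α - β) * α^(p-2)
  have hkey : (p - 1) * (α - β) * α ^ (p - 2) ≤ α ^ (p-1) - β ^ (p-1) := by
    have e2 : α ^ (p-1) = α ^ (p-2) * α := by
      calc α ^ (p-1) = α ^ ((p - 2) + 1) := by congr 1; ring
        _ = α ^ (p - 2) * α := Real.rpow_add_one hα.ne' _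
    have e1 : α ^ (p-1) * (1 + (p-1) * (β/α - 1)) =
        α ^ (p-1) - (p-1) * (α - β) * α ^ (p-2) := by
      rw [e2]; field_simp; ring
    rw [e1] at hbern
    linarith
  -- rewrite the RHS as a product
  have hrw : α ^ p + β ^ p - (α ^ (p-2) + β ^ (p-2)) * (α * β) =
      (α ^ (p-1) - β ^ (p-1)) * (α - β) := by
    have h1 : α ^ p = α ^ (p-1) * α := by
      calc α ^ p = α ^ ((p - 1) + 1) := by congr 1; ring
        _ = α ^ (p - 1) * α := Real.rpow_add_one hα.ne' _
    have h2 : β ^ p = β ^ (p-1) * β := by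
      rcases eq_or_lt_of_le hβ with h | h
      · rw [← h, Real.zero_rpow (by intro h'; linarith : p ≠ 0),
          Real.zero_rpow (by intro h'; linarith : p - 1 ≠ 0)]; ring
      · calc β ^ p = β ^ ((p - 1) + 1) := by congr 1; ring
          _ = β ^ (p - 1) * β := Real.rpow_add_one h.ne' _
    have h3 := simon_rpow_aux2 hp1 hp2 hα.le β
    have h4 := simon_rpow_aux2 hp1 hp2 hβ α
    rw [h1, h2]
    nlinarith [h3, h4]
  rw [hrw]
  have hd : 0 ≤ α - β := by linarith
  nlinarith [mul_le_mul_of_nonneg_left hX (mul_nonneg (mul_nonneg hq1 hd) hd),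
    mul_le_mul_of_nonneg_right hkey hd]

/-- Key 1-D lemma, aligned case, symmetric version. -/
lemma simon_scalar_A {p α β : ℝ} (hp1 : 1 < p) (hp2 : p < 2)
    (hα : 0 ≤ α) (hβ : 0 ≤ β) (hsum : 0 < α + β) :
    (p - 1) * (α - β) ^ (2:ℕ) * (α + β) ^ (p - 2) ≤
      α ^ p + β ^ p - (α ^ (p - 2) + β ^ (p - 2)) * (α * β) := by
  rcases le_total β α with h | h
  · exact simon_scalar_A' hp1 hp2 hβ h hsum
  · have := simon_scalar_A' hp1 hp2 (β := α) (α := β) hα h (by linarith)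
    calc (p - 1) * (α - β) ^ (2:ℕ) * (α + β) ^ (p - 2)
        = (p - 1) * (β - α) ^ (2:ℕ) * (β + α) ^ (p - 2) := by ring_nf
      _ ≤ β ^ p + α ^ p - (β ^ (p - 2) + α ^ (p - 2)) * (β * α) := this
      _ = α ^ p + β ^ p - (α ^ (p - 2) + β ^ (p - 2)) * (α * β) := by ring

/-- Key 1-D lemma, anti-aligned case: `(α+β)^p / 4 ≤ α^p + β^p`. -/
lemma simon_scalar_B {p α β : ℝ} (hp1 : 1 < p) (hp2 : p < 2)
    (hα : 0 ≤ α) (hβ : 0 ≤ β) :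
    (α + β) ^ p / 4 ≤ α ^ p + β ^ p := by
  have key : ∀ x y : ℝ, 0 ≤ y → y ≤ x → (x + y) ^ p / 4 ≤ x ^ p + y ^ p := by
    intro x y hy hyx
    have hx : 0 ≤ x := le_trans hy hyx
    have h1 : (x + y) ^ p ≤ (2 * x) ^ p :=
      Real.rpow_le_rpow (by linarith) (by linarith) (by linarith)
    have h2 : (2 * x) ^ p = 2 ^ p * x ^ p := Real.mul_rpow (by norm_num) hx
    have h3 : (2:ℝ) ^ p ≤ 2 ^ (2:ℝ) :=
      Real.rpow_le_rpow_of_exponent_le (by norm_num) (by linarith)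
    have h4 : (2:ℝ) ^ (2:ℝ) = 4 := by
      rw [show (2:ℝ) = ((2:ℕ):ℝ) from by norm_num, Real.rpow_natCast]; norm_num
    have hxp : (0:ℝ) ≤ x ^ p := Real.rpow_nonneg hx _
    have hyp : (0:ℝ) ≤ y ^ p := Real.rpow_nonneg hy _
    nlinarith [mul_le_mul_of_nonneg_right h3 hxp]
  rcases le_total β α with h | h
  · exact key α β hβ h
  · have := key β α hα h
    calc (α + β) ^ p / 4 = (β + α) ^ p / 4 := by ring_nf
      _ ≤ β ^ p + α ^ p := this
      _ = α ^ p + β ^ p := by ring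

set_option maxHeartbeats 1000000 in
theorem stmt_3 (p : ℝ) (hp1 : 1 < p) (hp2 : p < 2) (N : ℕ) :
    ∃ c > (0 : ℝ), ∀ a b : EuclideanSpace ℝ (Fin N), ¬(a = 0 ∧ b = 0) →
      c * ‖a - b‖ ^ 2 / (‖a‖ + ‖b‖) ^ (2 - p) ≤
        inner ℝ ((‖a‖ ^ (p - 2) : ℝ) • a - (‖b‖ ^ (p - 2) : ℝ) • b) (a - b) := by
  refine ⟨min (p - 1) 4⁻¹, lt_min (by linarith) (by norm_num), ?_⟩
  intro a b hab
  set α := ‖a‖ with hαdef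
  set β := ‖b‖ with hβdef
  have hα : 0 ≤ α := norm_nonneg a
  have hβ : 0 ≤ β := norm_nonneg b
  have hsum : 0 < α + β := by
    rcases (by positivity : (0:ℝ) ≤ α + β).lt_or_eq with h | h
    · exact h
    · exfalso; apply hab
      refine ⟨norm_eq_zero.mp ?_, norm_eq_zero.mp ?_⟩ <;> [rw [← hαdef]; rw [← hβdef]] <;> linarith
  set t : ℝ := inner ℝ a b with htdef
  have hcs : |t| ≤ α * β := abs_real_inner_le_norm a b
  have hcs1 : t ≤ α * β := (abs_le.mp hcs).2
  have hcs2 : -(α * β) ≤ t := (abs_le.mp hcs).1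
  have hba : (inner ℝ b a : ℝ) = t := by rw [htdef, real_inner_comm]
  -- expand the inner product
  have hinner : (inner ℝ ((α ^ (p - 2) : ℝ) • a - (β ^ (p - 2) : ℝ) • b) (a - b) : ℝ) =
      α ^ p + β ^ p - (α ^ (p - 2) + β ^ (p - 2)) * t := by
    rw [inner_sub_left, inner_sub_right, inner_sub_right,
      real_inner_smul_left, real_inner_smul_left, real_inner_smul_left, real_inner_smul_left,
      real_inner_self_eq_norm_mul_norm a, real_inner_self_eq_norm_mul_norm b, hba]
    simp only [← hαdef, ← hβdef, ← htdef]
    have e1 := simon_rpow_aux (by linarith : (0:ℝ) < p) hp2 hα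
    have e2 := simon_rpow_aux (by linarith : (0:ℝ) < p) hp2 hβ
    linarith [e1, e2]
  -- expand the norm square
  have hns : ‖a - b‖ ^ 2 = α * α + β * β - 2 * t := by
    rw [norm_sub_sq_real]
    simp only [← hαdef, ← hβdef, ← htdef]
    ring
  have hXpos : (0:ℝ) < (α + β) ^ (p - 2) := Real.rpow_pos_of_pos hsum _
  have hYpos : (0:ℝ) < (α + β) ^ (2 - p) := Real.rpow_pos_of_pos hsum _
  have hXY : (α + β) ^ (2 - p) * (α + β) ^ (p - 2) = 1 := by
    rw [← Real.rpow_add hsum]; norm_num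
  rw [hinner, div_le_iff₀ hYpos, hns]
  set X : ℝ := (α + β) ^ (p - 2) with hXdef
  set c : ℝ := min (p - 1) 4⁻¹ with hcdef
  have hc1 : c ≤ p - 1 := min_le_left _ _
  have hc2 : c ≤ 4⁻¹ := min_le_right _ _
  have hc0 : 0 < c := lt_min (by linarith) (by norm_num)
  have main : c * (α * α + β * β - 2 * t) * X ≤
      α ^ p + β ^ p - (α ^ (p - 2) + β ^ (p - 2)) * t := by
    have hA := simon_scalar_A hp1 hp2 hα hβ hsum
    have hB := simon_scalar_B hp1 hp2 hα hβ
    have hpow : (α + β) ^ p = (α + β) * (α + β) * X := by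
      rw [hXdef]
      calc (α + β) ^ p = (α + β) ^ ((p - 2) + 1 + 1) := by congr 1; ring
        _ = (α + β) ^ ((p - 2) + 1) * (α + β) := Real.rpow_add_one hsum.ne' _
        _ = (α + β) ^ (p - 2) * (α + β) * (α + β) := by rw [Real.rpow_add_one hsum.ne']
        _ = (α + β) * (α + β) * (α + β) ^ (p - 2) := by ring
    have hcross : 0 ≤ (α ^ (p - 2) + β ^ (p - 2)) * (α * β) := by
      have h1 := Real.rpow_nonneg hα (p - 2)
      have h2 := Real.rpow_nonneg hβ (p - 2)
      positivity
    -- endpoint estimate at t = α*β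
    have E1 : c * (α * α + β * β - 2 * (α * β)) * X ≤
        α ^ p + β ^ p - (α ^ (p - 2) + β ^ (p - 2)) * (α * β) := by
      have h5 : c * (α - β) ^ (2:ℕ) * X ≤ (p - 1) * (α - β) ^ (2:ℕ) * X :=
        mul_le_mul_of_nonneg_right (mul_le_mul_of_nonneg_right hc1 (sq_nonneg _)) hXpos.le
      linarith [hA, h5]
    -- endpoint estimate at t = -(α*β)
    have E2 : c * (α * α + β * β - 2 * (-(α * β))) * X ≤
        α ^ p + β ^ p - (α ^ (p - 2) + β ^ (p - 2)) * (-(α * β)) := by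
      have h5 : c * ((α + β) * (α + β) * X) ≤ 4⁻¹ * ((α + β) * (α + β) * X) :=
        mul_le_mul_of_nonneg_right hc2
          (mul_nonneg (mul_nonneg (by linarith) (by linarith)) hXpos.le)
      rw [hpow] at hB
      linarith [hB, h5, hcross]
    rcases le_total 0 ((α ^ (p - 2) + β ^ (p - 2)) - 2 * c * X) with hs | hs
    · linarith [E1, mul_nonneg hs (sub_nonneg.mpr hcs1)]
    · linarith [E2, mul_nonneg (neg_nonneg.mpr hs) (sub_nonneg.mpr hcs2)]
  have h6 : c * (α * α + β * β - 2 * t) * X * ((α + β) ^ (2 - p)) =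
      c * (α * α + β * β - 2 * t) := by
    linear_combination (c * (α * α + β * β - 2 * t)) * hXY
  calc c * (α * α + β * β - 2 * t)
      = c * (α * α + β * β - 2 * t) * X * ((α + β) ^ (2 - p)) := h6.symm
    _ ≤ (α ^ p + β ^ p - (α ^ (p - 2) + β ^ (p - 2)) * t) * (α + β) ^ (2 - p) :=
        mul_le_mul_of_nonneg_right main hYpos.le
end
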